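/- Let μ/ν be a skew shape of length at most n, let δ = (n-1, n-2, ..., 1, 0), and let h : [n] → [n] be the Hessenberg function defined by h(j) = max{ i ∈ [n] : μ_i - ν_j + j - i ≥ 0 }. For any permutation w ∈ S_n, the integer sequence μ + δ - w^{-1}(ν + δ) has no negative entries if and only if w(i) ≤ h(i) for all i ∈ [n]. -/

import Mathlib

open Equiv

/-- `T i j` is the entry of a filling in row `i`, column `j` (0-based);
entries outside the diagram of `shape` are `0`.  Rows weakly increase,
columns strictly increase. -/
def IsSSYT (shape : ℕ → ℕ) (T : ℕ → ℕ → ℕ) : Prop :=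
  (∀ i j, j + 1 < shape i → T i j ≤ T i (j + 1)) ∧
  (∀ i j, j < shape (i + 1) → T i j < T (i + 1) j) ∧
  (∀ i j, shape i ≤ j → T i j = 0)

/-- The Kostka number: the number of semistandard Young tableaux of the given
shape in which the entry `m` appears exactly `c m` times. -/
noncomputable def kostka (shape : ℕ → ℕ) (c : ℕ → ℕ) : ℕ :=
  Set.ncard {T : ℕ → ℕ → ℕ | IsSSYT shape T ∧
    ∀ m : ℕ, {p : ℕ × ℕ | p.2 < shape p.1 ∧ T p.1 p.2 = m}.ncard = c m}

open Classical in
/-- Kostka number for an integer content, with the convention that it is `0`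
whenever the content has a negative entry. -/
noncomputable def kostkaZ (shape : ℕ → ℕ) (c : ℕ → ℤ) : ℕ :=
  if ∀ m, 0 ≤ c m then kostka shape (fun m => (c m).toNat) else 0

/-- The hook shape `(N - k, 1, ..., 1)` with `k` trailing rows of length 1. -/
def hookShape (N k : ℕ) : ℕ → ℕ :=
  fun i => if i = 0 then N - k else if i ≤ k then 1 else 0

/-- Extend a sequence indexed by `Fin n` to all of `ℕ` by zeros. -/
def extendSeq {n : ℕ} (a : Fin n → ℤ) : ℕ → ℤ :=
  fun m => if h : m < n then a ⟨m, h⟩ else 0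

/-- The staircase `δ = (n-1, n-2, ..., 1, 0)`. -/
def deltaSeq (n : ℕ) : Fin n → ℤ := fun i => (n : ℤ) - 1 - (i.val : ℤ)

/-- The sequence `μ + δ - w(ν + δ)`, where a permutation acts on sequences by
shuffling: `(w(a))_i = a_{w⁻¹(i)}`. -/
def hatSeq {n : ℕ} (μ ν : Fin n → ℕ) (w : Perm (Fin n)) : Fin n → ℤ :=
  fun i => ((μ i : ℤ) + deltaSeq n i) - ((ν (w⁻¹ i) : ℤ) + deltaSeq n (w⁻¹ i))

/-- `h` is the Hessenberg function of the skew shape `μ/ν`: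
`h j = max { i | μ i - ν j + j - i ≥ 0 }`. -/
def IsHessOf {n : ℕ} (μ ν : Fin n → ℕ) (h : Fin n → Fin n) : Prop :=
  ∀ j : Fin n, (ν j + ((h j : ℕ)) ≤ μ (h j) + (j : ℕ)) ∧
    ∀ i : Fin n, ν j + (i : ℕ) ≤ μ i + (j : ℕ) → i ≤ h j

/-- The indicator `ĥ(w)` of the condition `w(i) ≤ h(i)` for all `i`. -/
def hhat {n : ℕ} (h : Fin n → Fin n) (w : Perm (Fin n)) : ℕ :=
  if ∀ i, w i ≤ h i then 1 else 0

/-- The modified Hessenberg function `h^J`: `h^J(i) = h(i) - 1` when `i ∈ J` and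
`μ_{h(i)} - ν_i + i - h(i) = 0`, and `h^J(i) = h(i)` otherwise. -/
def hJfun {n : ℕ} (μ ν : Fin n → ℕ) (h : Fin n → Fin n) (J : Finset (Fin n)) :
    Fin n → Fin n :=
  fun i => if i ∈ J ∧ μ (h i) + (i : ℕ) = ν i + ((h i : ℕ)) then
      ⟨(h i : ℕ) - 1, Nat.lt_of_le_of_lt (Nat.sub_le _ _) (h i).isLt⟩
    else h i

open Classical in
/-- The conjugacy class of `w` in the symmetric group, as a finset. -/
noncomputable def conjClass {n : ℕ} (w : Perm (Fin n)) : Finset (Perm (Fin n)) :=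
  Finset.univ.filter (fun v => IsConj w v)

/-- The Stanley–Stembridge character
`Γ_h(w) = (n! / |C(w)|) · Σ_{w' ∈ C(w)} ĥ(w')`. -/
noncomputable def GammaH {n : ℕ} (h : Fin n → Fin n) (w : Perm (Fin n)) : ℚ :=
  ((n.factorial : ℚ) / ((conjClass w).card : ℚ)) * ∑ v ∈ conjClass w, (hhat h v : ℚ)

/-- The immanant character
`Γ^θ_{μ/ν}(w) = (n! / |C(w)|) · Σ_{w' ∈ C(w)} K_{θ, μ+δ-w'(ν+δ)}`. -/
noncomputable def GammaTheta {n : ℕ} (shape : ℕ → ℕ) (μ ν : Fin n → ℕ)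
    (w : Perm (Fin n)) : ℚ :=
  ((n.factorial : ℚ) / ((conjClass w).card : ℚ)) *
    ∑ v ∈ conjClass w, (kostkaZ shape (extendSeq (hatSeq μ ν v)) : ℚ)

/-- Lemma 2.8: the sequence `μ + δ - w⁻¹(ν + δ)` (whose `i`-th
entry is `(μ+δ)_i - (ν+δ)_{w⁻¹(i)}`) has no negative entries if and only if
`w(i) ≤ h(i)` for all `i`, where `h` is the Hessenberg function of `μ/ν`. -/
theorem stmt1 {n : ℕ} (μ ν : Fin n → ℕ) (hμ : Antitone μ) (hν : Antitone ν)
    (hle : ∀ i, ν i ≤ μ i) (h : Fin n → Fin n) (hh : IsHessOf μ ν h)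
    (w : Perm (Fin n)) :
    (∀ i : Fin n,
        0 ≤ ((μ i : ℤ) + deltaSeq n i) - ((ν (w⁻¹ i) : ℤ) + deltaSeq n (w⁻¹ i)))
      ↔ (∀ i, w i ≤ h i) := by
  constructor
  · intro H j
    have := H (w j)
    simp only [deltaSeq, Perm.inv_def, Equiv.symm_apply_apply] at this
    apply (hh j).2
    have hc : (ν j : ℤ) + (w j : ℕ) ≤ (μ (w j) : ℤ) + (j : ℕ) := by
      push_cast at this ⊢; omega
    exact_mod_cast hc
  · intro H i
    set j := w⁻¹ i with hj
    have hwj : w j = i := w.apply_symm_apply i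
    have h1 : ν j + (h j : ℕ) ≤ μ (h j) + (j : ℕ) := (hh j).1
    have h2 : w j ≤ h j := H j
    have h3 : μ (h j) ≤ μ (w j) := hμ h2
    have : ν j + (i : ℕ) ≤ μ i + (j : ℕ) := by
      rw [← hwj]
      have : (w j : ℕ) ≤ (h j : ℕ) := h2
      omega
    simp only [deltaSeq]
    push_cast
    omega
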